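/- If φ is a nondegenerate symmetric bilinear form of rank ≥ 3 on V whose signature (p,q) satisfies p ≠ q, then every A ∈ GL(V) with A*R_φ = R_φ satisfies A*φ = φ; that is, the structure group of R_φ equals the isometry group of φ. -/

import Mathlib

lemma act_rigidity {n : ℕ} (hn : 3 ≤ n) (ε : Fin n → ℝ)
    (hε : ∀ i, ε i = 1 ∨ ε i = -1) (M : Fin n → Fin n → ℝ)
    (hMs : ∀ i j, M i j = M j i)
    (key : ∀ i j k l, M i l * M j k - M i k * M j l =
      (if i = l then ε i else 0) * (if j = k then ε j else 0) -
      (if i = k then ε i else 0) * (if j = l then ε j else 0)) :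
    ∃ c : ℝ, (c = 1 ∨ c = -1) ∧ ∀ i j, M i j = c * (if i = j then ε i else 0) := by
  have hε2 : ∀ i, ε i * ε i = 1 := fun i => by rcases hε i with h | h <;> rw [h] <;> norm_num
  have hεne : ∀ i, ε i ≠ 0 := fun i => by rcases hε i with h | h <;> rw [h] <;> norm_num
  have R1 : ∀ i j, i ≠ j → M i i * M j j - M i j * M i j = ε i * ε j := by
    intro i j hij
    have h := key i j j i
    simp only [if_pos rfl, if_neg hij, if_neg (Ne.symm hij), if_true, mul_zero, zero_mul,
      sub_zero] at h
    rw [hMs j i] at h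
    exact h
  have off : ∀ a b, a ≠ b → M a b = 0 := by
    intro a b hab
    by_contra hMab
    obtain ⟨c, hca, hcb⟩ : ∃ c : Fin n, c ≠ a ∧ c ≠ b := by
      have h1 : (Finset.univ \ {a, b} : Finset (Fin n)).Nonempty := by
        rw [← Finset.card_pos, Finset.card_sdiff_of_subset (Finset.subset_univ _)]
        have h2 : ({a, b} : Finset (Fin n)).card ≤ 2 :=
          (Finset.card_insert_le _ _).trans (by simp)
        simp only [Finset.card_univ, Fintype.card_fin]
        omega
      obtain ⟨c, hc⟩ := h1
      simp only [Finset.mem_sdiff, Finset.mem_insert, Finset.mem_singleton] at hc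
      exact ⟨c, fun h => hc.2 (Or.inl h), fun h => hc.2 (Or.inr h)⟩
    have R2 : M a a * M b c = M a c * M a b := by
      have h := key a b c a
      simp only [if_pos rfl, if_neg (Ne.symm hcb), if_neg (Ne.symm hca), if_neg (Ne.symm hab),
        if_true, mul_zero, zero_mul, sub_zero] at h
      rw [hMs b a] at h
      linarith
    have R3 : M b b * M a c = M b c * M a b := by
      have h := key b a c b
      simp only [if_pos rfl, if_neg (Ne.symm hca), if_neg (Ne.symm hcb), if_neg hab,
        if_true, mul_zero, zero_mul, sub_zero] at h
      linarith
    have R4 : M c c * M a b = M a c * M b c := by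
      have h := key a c c b
      simp only [if_pos rfl, if_neg hab, if_neg (Ne.symm hca), if_true, mul_zero, zero_mul,
        sub_zero] at h
      rw [hMs c b] at h
      linarith
    by_cases hac : M a c * M b c = 0
    · have hcc : M c c = 0 := by
        have h0 : M c c * M a b = 0 := by
          rcases mul_eq_zero.mp hac with h | h <;> rw [R4, h] <;> ring
        exact (mul_eq_zero.mp h0).resolve_right hMab
      rcases mul_eq_zero.mp hac with h | h
      · have h1 := R1 a c hca.symm
        rw [hcc, h] at h1
        have h0 : ε a * ε c = 0 := by linarith
        exact mul_ne_zero (hεne a) (hεne c) h0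
      · have h1 := R1 b c hcb.symm
        rw [hcc, h] at h1
        have h0 : ε b * ε c = 0 := by linarith
        exact mul_ne_zero (hεne b) (hεne c) h0
    · have h1 : M a a * M b b * (M a c * M b c) = M a b * M a b * (M a c * M b c) := by
        calc M a a * M b b * (M a c * M b c)
            = (M a a * M b c) * (M b b * M a c) := by ring
          _ = (M a c * M a b) * (M b c * M a b) := by rw [R2, R3]
          _ = M a b * M a b * (M a c * M b c) := by ring
      have h2 : M a a * M b b = M a b * M a b := mul_right_cancel₀ hac h1
      have h3 := R1 a b hab
      rw [h2] at h3
      have h0 : ε a * ε b = 0 := by linarith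
      exact mul_ne_zero (hεne a) (hεne b) h0
  have DD : ∀ i j, i ≠ j → M i i * M j j = ε i * ε j := by
    intro i j hij
    have h := R1 i j hij
    rw [off i j hij] at h
    linarith
  set i0 : Fin n := ⟨0, by omega⟩ with hi0
  set i1 : Fin n := ⟨1, by omega⟩ with hi1
  set i2 : Fin n := ⟨2, by omega⟩ with hi2
  have h01 : i0 ≠ i1 := by simp [hi0, hi1, Fin.ext_iff]
  have h02 : i0 ≠ i2 := by simp [hi0, hi2, Fin.ext_iff]
  have h12 : i1 ≠ i2 := by simp [hi1, hi2, Fin.ext_iff]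
  have a1 := DD i0 i1 h01
  have a2 := DD i0 i2 h02
  have a3 := DD i1 i2 h12
  have hM00sq : M i0 i0 * M i0 i0 = 1 := by
    have hne : ε i1 * ε i2 ≠ 0 := mul_ne_zero (hεne i1) (hεne i2)
    have hcalc : M i0 i0 * M i0 i0 * (ε i1 * ε i2) = 1 * (ε i1 * ε i2) := by
      calc M i0 i0 * M i0 i0 * (ε i1 * ε i2)
          = M i0 i0 * M i0 i0 * (M i1 i1 * M i2 i2) := by rw [a3]
        _ = (M i0 i0 * M i1 i1) * (M i0 i0 * M i2 i2) := by ring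
        _ = (ε i0 * ε i1) * (ε i0 * ε i2) := by rw [a1, a2]
        _ = (ε i0 * ε i0) * (ε i1 * ε i2) := by ring
        _ = 1 * (ε i1 * ε i2) := by rw [hε2 i0]
    exact mul_right_cancel₀ hne hcalc
  have hM00ne : M i0 i0 ≠ 0 := fun h => by rw [h] at hM00sq; norm_num at hM00sq
  set c : ℝ := M i0 i0 * ε i0 with hc
  have hc2 : c * c = 1 := by
    have h' : c * c = (M i0 i0 * M i0 i0) * (ε i0 * ε i0) := by rw [hc]; ring
    rw [h', hM00sq, hε2, mul_one]
  refine ⟨c, mul_self_eq_one_iff.mp hc2, ?_⟩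
  have hdiag : ∀ i, M i i = c * ε i := by
    intro i
    by_cases hi : i = i0
    · subst hi
      have h' : c * ε i0 = M i0 i0 * (ε i0 * ε i0) := by rw [hc]; ring
      rw [h', hε2, mul_one]
    · have hd := DD i i0 hi
      have h' : (c * ε i) * M i0 i0 = ε i * ε i0 := by
        have h'' : (c * ε i) * M i0 i0 = (M i0 i0 * M i0 i0) * (ε i0 * ε i) := by rw [hc]; ring
        rw [h'', hM00sq]; ring
      exact mul_right_cancel₀ hM00ne (hd.trans h'.symm)
  intro i j
  by_cases hij : i = j
  · subst hij; simp [hdiag i]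
  · simp [off i j hij, hij]

lemma sylvester_aux {V : Type*} [AddCommGroup V] [Module ℝ V] [FiniteDimensional ℝ V]
    (φ : LinearMap.BilinForm ℝ V) {ι : Type*} [Fintype ι] [DecidableEq ι]
    (u v : ι → V) (hu : LinearIndependent ℝ u) (hv : LinearIndependent ℝ v)
    (huu : ∀ i j, φ (u i) (u j) = if i = j then 1 else 0)
    (hvv : ∀ i j, φ (v i) (v j) = if i = j then -1 else 0) :
    2 * Fintype.card ι ≤ Module.finrank ℝ V := by
  have expand : ∀ (w : ι → V) (s : ℝ), (∀ i j, φ (w i) (w j) = if i = j then s else 0) →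
      ∀ q : ι → ℝ, φ (∑ i, q i • w i) (∑ i, q i • w i) = s * ∑ i, (q i)^2 := by
    intro w s hw q
    rw [map_sum]
    simp only [LinearMap.coe_sum, Finset.sum_apply, map_smul, LinearMap.smul_apply,
      map_sum, smul_eq_mul, hw, mul_ite, mul_zero, mul_one, Finset.sum_ite_eq',
      Finset.mem_univ, if_true, Finset.mul_sum]
    exact Finset.sum_congr rfl fun i _ => by ring
  set P := Submodule.span ℝ (Set.range u) with hP
  set Q := Submodule.span ℝ (Set.range v) with hQ
  have hPQ : P ⊓ Q = ⊥ := by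
    rw [eq_bot_iff]
    rintro x ⟨hxP, hxQ⟩
    obtain ⟨q, hq⟩ := Submodule.mem_span_range_iff_exists_fun ℝ |>.mp hxP
    obtain ⟨r, hr⟩ := Submodule.mem_span_range_iff_exists_fun ℝ |>.mp hxQ
    have h1 : φ x x = 1 * ∑ i, (q i)^2 := by rw [← hq]; exact expand u 1 huu q
    have h2 : φ x x = (-1) * ∑ i, (r i)^2 := by rw [← hr]; exact expand v (-1) hvv r
    have hq0 : ∑ i, (q i)^2 = 0 := by
      have hsq : (0:ℝ) ≤ ∑ i, (q i)^2 := Finset.sum_nonneg fun i _ => sq_nonneg _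
      have hsr : (0:ℝ) ≤ ∑ i, (r i)^2 := Finset.sum_nonneg fun i _ => sq_nonneg _
      linarith
    have hqz : ∀ i ∈ Finset.univ, (q i)^2 = 0 :=
      (Finset.sum_eq_zero_iff_of_nonneg fun i _ => sq_nonneg _).mp hq0
    have hx0 : x = 0 := by
      rw [← hq]
      apply Finset.sum_eq_zero
      intro i hi
      rw [pow_eq_zero_iff two_ne_zero |>.mp (hqz i hi), zero_smul]
    simp [hx0]
  have hrP : Module.finrank ℝ P = Fintype.card ι := finrank_span_eq_card hu
  have hrQ : Module.finrank ℝ Q = Fintype.card ι := finrank_span_eq_card hv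
  have hsum := Submodule.finrank_sup_add_finrank_inf_eq P Q
  rw [hPQ, hrP, hrQ] at hsum
  simp only [finrank_bot, add_zero] at hsum
  have := Submodule.finrank_le (P ⊔ Q)
  omega

/-- The canonical algebraic curvature tensor built from a symmetric bilinear form. -/
def canACT {V : Type*} [AddCommGroup V] [Module ℝ V]
    (φ : LinearMap.BilinForm ℝ V) (x y z w : V) : ℝ :=
  φ x w * φ y z - φ x z * φ y w

theorem stmt6 {V : Type*} [AddCommGroup V] [Module ℝ V] [FiniteDimensional ℝ V]
    (φ : LinearMap.BilinForm ℝ V) (hsymm : ∀ x y : V, φ x y = φ y x)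
    (hnd : φ.Nondegenerate)
    (hdim : 3 ≤ Module.finrank ℝ V)
    -- an orthonormal basis realizing the signature (p, q)
    (n : ℕ) (e : Module.Basis (Fin n) ℝ V) (ε : Fin n → ℝ)
    (hε : ∀ i, ε i = 1 ∨ ε i = -1)
    (horth : ∀ i j, φ (e i) (e j) = if i = j then ε i else 0)
    -- p ≠ q :
    (hsig : (Finset.univ.filter fun i => ε i = 1).card ≠
            (Finset.univ.filter fun i => ε i = -1).card)
    (A : V ≃ₗ[ℝ] V)
    (hA : ∀ x y z w : V, canACT φ (A x) (A y) (A z) (A w) = canACT φ x y z w) :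
    ∀ x y : V, φ (A x) (A y) = φ x y := by
  classical
  have hn3 : 3 ≤ n := by
    rwa [Module.finrank_eq_card_basis e, Fintype.card_fin] at hdim
  set M : Fin n → Fin n → ℝ := fun i j => φ (A (e i)) (A (e j)) with hMdef
  have hMs : ∀ i j, M i j = M j i := fun i j => hsymm _ _
  have key : ∀ i j k l, M i l * M j k - M i k * M j l =
      (if i = l then ε i else 0) * (if j = k then ε j else 0) -
      (if i = k then ε i else 0) * (if j = l then ε j else 0) := by
    intro i j k l
    have h := hA (e i) (e j) (e k) (e l)
    simp only [canACT, horth] at h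
    exact h
  obtain ⟨c, hc1, hM⟩ := act_rigidity hn3 ε hε M hMs key
  -- rule out c = -1 using the signature
  have hcpos : c = 1 := by
    rcases hc1 with hc1 | hc1
    · exact hc1
    exfalso
    subst hc1
    have hn : Module.finrank ℝ V = n := by
      rw [Module.finrank_eq_card_basis e, Fintype.card_fin]
    -- first application: subtype where ε = 1
    have hS : 2 * Fintype.card {i : Fin n // ε i = 1} ≤ Module.finrank ℝ V := by
      apply sylvester_aux φ (fun i : {i : Fin n // ε i = 1} => e i.1)
        (fun i : {i : Fin n // ε i = 1} => (e.map A) i.1)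
      · exact e.linearIndependent.comp Subtype.val Subtype.val_injective
      · exact (e.map A).linearIndependent.comp Subtype.val Subtype.val_injective
      · intro i j
        rw [horth]
        by_cases h : i = j
        · rw [if_pos (congrArg Subtype.val h), if_pos h, i.2]
        · rw [if_neg (fun hh => h (Subtype.ext hh)), if_neg h]
      · intro i j
        simp only [Module.Basis.map_apply]
        have h0 : φ (A (e i.1)) (A (e j.1)) =
            -1 * (if (i : Fin n) = (j : Fin n) then ε i.1 else 0) := hM i.1 j.1
        rw [h0]
        by_cases h : i = j
        · rw [if_pos (congrArg Subtype.val h), if_pos h, i.2]; norm_num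
        · rw [if_neg (fun hh => h (Subtype.ext hh)), if_neg h, mul_zero]
    -- second application: subtype where ε = -1
    have hT : 2 * Fintype.card {i : Fin n // ε i = -1} ≤ Module.finrank ℝ V := by
      apply sylvester_aux φ (fun i : {i : Fin n // ε i = -1} => (e.map A) i.1)
        (fun i : {i : Fin n // ε i = -1} => e i.1)
      · exact (e.map A).linearIndependent.comp Subtype.val Subtype.val_injective
      · exact e.linearIndependent.comp Subtype.val Subtype.val_injective
      · intro i j
        simp only [Module.Basis.map_apply]
        have h0 : φ (A (e i.1)) (A (e j.1)) =
            -1 * (if (i : Fin n) = (j : Fin n) then ε i.1 else 0) := hM i.1 j.1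
        rw [h0]
        by_cases h : i = j
        · rw [if_pos (congrArg Subtype.val h), if_pos h, i.2]; norm_num
        · rw [if_neg (fun hh => h (Subtype.ext hh)), if_neg h, mul_zero]
      · intro i j
        rw [horth]
        by_cases h : i = j
        · rw [if_pos (congrArg Subtype.val h), if_pos h, i.2]
        · rw [if_neg (fun hh => h (Subtype.ext hh)), if_neg h]
    rw [Fintype.card_subtype] at hS hT
    have hpart : (Finset.univ.filter fun i => ε i = 1).card +
        (Finset.univ.filter fun i => ε i = -1).card = n := by
      have h1 : (Finset.univ.filter fun i => ε i = -1) =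
          (Finset.univ.filter fun i => ¬ ε i = 1) := by
        apply Finset.filter_congr
        intro i _
        constructor
        · intro h h'; rw [h'] at h; norm_num at h
        · intro h; exact (hε i).resolve_left h
      rw [h1, Finset.card_filter_add_card_filter_not, Finset.card_univ,
        Fintype.card_fin]
    rw [hn] at hS hT
    omega
  -- conclude
  subst hcpos
  have hB : φ.compl₁₂ (A : V →ₗ[ℝ] V) (A : V →ₗ[ℝ] V) = φ := by
    apply e.ext
    intro i
    apply e.ext
    intro j
    rw [LinearMap.compl₁₂_apply, horth]
    have := hM i j
    rw [one_mul] at this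
    exact this
  intro x y
  have h := LinearMap.congr_fun (LinearMap.congr_fun hB x) y
  rwa [LinearMap.compl₁₂_apply] at h
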